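/- Let X be a measurable space, n ∈ ℕ, and Φ : Ω → Measure(X) a point process. Define the n-th moment measure μ⁽ⁿ⁾ of Φ by μ⁽ⁿ⁾(A) = E[Φ^{⊗n}(A)] for Borel A ⊆ X^n, where Φ^{⊗n} is the n-fold product measure of Φ with itself, and assume 0 < μ⁽ⁿ⁾(X^n) < ∞. Let ℱ^n be a class of probability measures on X^n containing (μ⁽ⁿ⁾)* = μ⁽ⁿ⁾ / μ⁽ⁿ⁾(X^n), let S : ℱ^n × X^n → ℝ be a measurable strictly consistent scoring function for the identity on ℱ^n with S(ν, ·) μ⁽ⁿ⁾-integrable, and let b : [0, ∞) × [0, ∞) → ℝ be a strictly consistent Bregman function. Fix c > 0 and define S₁(μ, φ) = ∫_{X^n} S(μ / μ(X^n), x₁, …, xₙ) dφ^{⊗n}(x₁, …, xₙ) + c · b(μ(X^n), φ(X)^n). Then, assuming all expectations are finite, for every finite nonzero measure μ on X^n in the relevant class, E[S₁(μ, Φ)] ≥ E[S₁(μ⁽ⁿ⁾, Φ)], with equality if and only if μ = μ⁽ⁿ⁾; i.e. S₁ is a strictly consistent scoring function for the n-th moment measure. -/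

import Mathlib

open MeasureTheory

lemma aux_integral_bind {Ω Y : Type*} [MeasurableSpace Ω] [MeasurableSpace Y]
    (μ : Measure Ω) (κ : Ω → Measure Y) (hκ : Measurable κ)
    (g : Y → ℝ) (hg : Measurable g) (hgint : Integrable g (μ.bind κ)) :
    ∫ y, g y ∂(μ.bind κ) = ∫ ω, ∫ y, g y ∂(κ ω) ∂μ := by
  have hnormmeas : Measurable fun y => (‖g y‖₊ : ENNReal) := hg.nnnorm.coe_nnreal_ennreal
  have hnorm : ∫⁻ ω, ∫⁻ y, (‖g y‖₊ : ENNReal) ∂(κ ω) ∂μ ≠ ⊤ := by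
    rw [← Measure.lintegral_bind hκ.aemeasurable hnormmeas.aemeasurable]
    exact hgint.2.ne
  have hmeasInner : Measurable fun ω => ∫⁻ y, (‖g y‖₊ : ENNReal) ∂(κ ω) :=
    (Measure.measurable_lintegral hnormmeas).comp hκ
  have haefin : ∀ᵐ ω ∂μ, (∫⁻ y, (‖g y‖₊ : ENNReal) ∂(κ ω)) < ⊤ :=
    ae_lt_top hmeasInner hnorm
  set P : Ω → ENNReal := fun ω => ∫⁻ y, ENNReal.ofReal (g y) ∂(κ ω) with hP
  set N : Ω → ENNReal := fun ω => ∫⁻ y, ENNReal.ofReal (-g y) ∂(κ ω) with hN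
  have hPm : Measurable P := (Measure.measurable_lintegral hg.ennreal_ofReal).comp hκ
  have hNm : Measurable N := (Measure.measurable_lintegral hg.neg.ennreal_ofReal).comp hκ
  have hle : ∀ y, ENNReal.ofReal (g y) ≤ (‖g y‖₊ : ENNReal) := fun y => Real.ofReal_le_enorm _
  have hle' : ∀ y, ENNReal.ofReal (-g y) ≤ (‖g y‖₊ : ENNReal) := fun y => by
    exact (Real.ofReal_le_enorm (-g y)).trans (le_of_eq (enorm_neg _))
  have hPfin : ∫⁻ ω, P ω ∂μ ≠ ⊤ :=
    ne_top_of_le_ne_top hnorm (lintegral_mono fun ω => lintegral_mono fun y => hle y)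
  have hNfin : ∫⁻ ω, N ω ∂μ ≠ ⊤ :=
    ne_top_of_le_ne_top hnorm (lintegral_mono fun ω => lintegral_mono fun y => hle' y)
  have haeP : ∀ᵐ ω ∂μ, P ω < ⊤ := ae_lt_top hPm hPfin
  have haeN : ∀ᵐ ω ∂μ, N ω < ⊤ := ae_lt_top hNm hNfin
  have haeint : ∀ᵐ ω ∂μ, Integrable g (κ ω) := by
    filter_upwards [haefin] with ω hω
    exact ⟨hg.aestronglyMeasurable, hω⟩
  have hinner : ∀ᵐ ω ∂μ, ∫ y, g y ∂(κ ω) = (P ω).toReal - (N ω).toReal := by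
    filter_upwards [haeint] with ω hω
    exact integral_eq_lintegral_pos_part_sub_lintegral_neg_part hω
  have hPint : Integrable (fun ω => (P ω).toReal) μ :=
    integrable_toReal_of_lintegral_ne_top hPm.aemeasurable hPfin
  have hNint : Integrable (fun ω => (N ω).toReal) μ :=
    integrable_toReal_of_lintegral_ne_top hNm.aemeasurable hNfin
  rw [integral_congr_ae hinner, integral_sub hPint hNint,
    integral_toReal hPm.aemeasurable haeP, integral_toReal hNm.aemeasurable haeN,
    integral_eq_lintegral_pos_part_sub_lintegral_neg_part hgint,
    Measure.lintegral_bind hκ.aemeasurable hg.ennreal_ofReal.aemeasurable, Measure.lintegral_bind (f := fun y => ENNReal.ofReal (-g y)) hκ.aemeasurable hg.neg.ennreal_ofReal.aemeasurable]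

lemma aux_bregman_strict (f f' : ℝ → ℝ) (hf : StrictConvexOn ℝ (Set.Ici 0) f)
    (hsub : ∀ x ∈ Set.Ici (0:ℝ), ∀ m ∈ Set.Ici (0:ℝ), f x + f' x * (m - x) ≤ f m)
    (a T : ℝ) (ha : a ∈ Set.Ici (0:ℝ)) (hT : T ∈ Set.Ici (0:ℝ)) (hne : a ≠ T) :
    f a + f' a * (T - a) < f T := by
  have ha' : (0:ℝ) ≤ a := ha
  have hT' : (0:ℝ) ≤ T := hT
  have hmem : (1/2 : ℝ) • a + (1/2 : ℝ) • T ∈ Set.Ici (0:ℝ) := by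
    simp only [smul_eq_mul, Set.mem_Ici]; linarith
  have hmid : f ((1/2 : ℝ) • a + (1/2 : ℝ) • T) <
      (1/2 : ℝ) • f a + (1/2 : ℝ) • f T :=
    hf.2 ha hT hne (by norm_num) (by norm_num) (by norm_num)
  have hsubm := hsub a ha ((1/2 : ℝ) • a + (1/2 : ℝ) • T) hmem
  simp only [smul_eq_mul] at hmid hsubm
  nlinarith [hsubm, hmid]

theorem moment_measure_score_strictly_consistent
    {Ω X : Type*} [MeasurableSpace Ω] [MeasurableSpace X] (n : ℕ)
    (μ : Measure Ω) [IsProbabilityMeasure μ]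
    (Φ : Ω → Measure X)
    (hΦmeas : ∀ B : Set X, MeasurableSet B → Measurable fun ω => Φ ω B)
    (hΦfin : ∀ ω, IsFiniteMeasure (Φ ω))
    -- `pp ω` is the n-fold product measure `(Φ ω)^{⊗n}`
    (pp : Ω → Measure (Fin n → X))
    (hpp : ∀ ω, ∀ s : Fin n → Set X, (∀ i, MeasurableSet (s i)) →
      pp ω (Set.univ.pi s) = ∏ i, Φ ω (s i))
    -- the n-th moment measure
    (μn : Measure (Fin n → X))
    (hμn : ∀ A : Set (Fin n → X), MeasurableSet A → μn A = ∫⁻ ω, pp ω A ∂μ)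
    (hμnPos : 0 < μn Set.univ) (hμnFin : μn Set.univ < ⊤)
    -- the class of candidate moment measures, containing `μn`
    (𝓜 : Set (Measure (Fin n → X))) (hμnMem : μn ∈ 𝓜)
    (h𝓜fin : ∀ ν ∈ 𝓜, IsFiniteMeasure ν) (h𝓜ne : ∀ ν ∈ 𝓜, ν ≠ 0)
    -- the class `ℱⁿ` of probability measures on `Xⁿ` and the score `S` on it
    (𝓕n : Set (Measure (Fin n → X)))
    (hmemNorm : ∀ ν ∈ 𝓜, (ν Set.univ)⁻¹ • ν ∈ 𝓕n)
    (S : Measure (Fin n → X) → (Fin n → X) → ℝ)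
    (hSmeas : ∀ P ∈ 𝓕n, Measurable (S P))
    (hSint : ∀ P ∈ 𝓕n, Integrable (S P) μn)
    (hS : ∀ P ∈ 𝓕n, ∀ Q ∈ 𝓕n,
      (∫ x, S P x ∂P ≤ ∫ x, S Q x ∂P) ∧
      (∫ x, S Q x ∂P = ∫ x, S P x ∂P → Q = P))
    -- a strictly consistent Bregman function `b` on `[0, ∞)`
    (f f' : ℝ → ℝ) (hf : StrictConvexOn ℝ (Set.Ici 0) f)
    (hsub : ∀ x ∈ Set.Ici (0:ℝ), ∀ m ∈ Set.Ici (0:ℝ),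
      f x + f' x * (m - x) ≤ f m)
    (b : ℝ → ℝ → ℝ) (hb : ∀ x m, b x m = -f x - f' x * (m - x))
    (c : ℝ) (hc : 0 < c)
    -- the combined score `S₁`, evaluated at the report `ν` and a realization
    (S₁ : Measure (Fin n → X) → Ω → ℝ)
    (hS₁ : ∀ ν ω, S₁ ν ω = (∫ x, S ((ν Set.univ)⁻¹ • ν) x ∂(pp ω)) +
      c * b (ν Set.univ).toReal (((Φ ω Set.univ).toReal) ^ n))
    -- all expectations are assumed finite
    (hint : ∀ ν ∈ 𝓜, Integrable (S₁ ν) μ) :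
    ∀ ν ∈ 𝓜,
      (∫ ω, S₁ μn ω ∂μ ≤ ∫ ω, S₁ ν ω ∂μ) ∧
      (∫ ω, S₁ ν ω ∂μ = ∫ ω, S₁ μn ω ∂μ ↔ ν = μn) := by
  -- `pp ω` of `univ`
  have hppuniv : ∀ ω, pp ω Set.univ = (Φ ω Set.univ) ^ n := by
    intro ω
    have h := hpp ω (fun _ => Set.univ) (fun _ => MeasurableSet.univ)
    simpa [Set.pi_univ, Finset.prod_const] using h
  have hppfin : ∀ ω (A : Set (Fin n → X)), pp ω A ≠ ⊤ := by
    intro ω A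
    refine ne_top_of_le_ne_top ?_ (measure_mono (Set.subset_univ A))
    rw [hppuniv]
    exact ENNReal.pow_ne_top (measure_ne_top _ _)
  have hppunivMeas : Measurable fun ω => pp ω Set.univ := by
    simp only [hppuniv]
    exact (hΦmeas Set.univ MeasurableSet.univ).pow_const n
  -- measurability of `ω ↦ pp ω A`
  have hppMeasSet : ∀ A : Set (Fin n → X), MeasurableSet A →
      Measurable fun ω => pp ω A := by
    refine MeasurableSpace.induction_on_inter
      (C := fun A _ => Measurable fun ω => pp ω A)
      generateFrom_pi.symm isPiSystem_pi ?_ ?_ ?_ ?_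
    · simp only [measure_empty]; exact measurable_const
    · rintro t ⟨s, hs, rfl⟩
      have hmeas : ∀ i, MeasurableSet (s i) := fun i => hs i (Set.mem_univ i)
      simp only [hpp _ s hmeas]
      exact Finset.measurable_prod _ fun i _ => hΦmeas (s i) (hmeas i)
    · intro t ht hC
      have : ∀ ω, pp ω tᶜ = pp ω Set.univ - pp ω t := fun ω =>
        measure_compl ht (hppfin ω t)
      simp only [this]
      exact hppunivMeas.sub hC
    · intro g hdisj hm hC
      simp only [measure_iUnion hdisj hm]
      exact Measurable.ennreal_tsum hC
  have hppMeas : Measurable pp := Measure.measurable_of_measurable_coe pp hppMeasSet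
  have hbind : μ.bind pp = μn := by
    ext s hs
    rw [Measure.bind_apply hs hppMeas.aemeasurable, hμn s hs]
  -- quantities
  set T : ℝ := (μn Set.univ).toReal with hTdef
  have hT0 : 0 < T := ENNReal.toReal_pos hμnPos.ne' hμnFin.ne
  -- the integral of `M ω = (pp ω univ).toReal`
  have hMfin : ∫⁻ ω, pp ω Set.univ ∂μ ≠ ⊤ := by
    rw [← hμn Set.univ MeasurableSet.univ]; exact hμnFin.ne
  have hMint : Integrable (fun ω => (pp ω Set.univ).toReal) μ :=
    integrable_toReal_of_lintegral_ne_top hppunivMeas.aemeasurable hMfin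
  have hMavg : ∫ ω, (pp ω Set.univ).toReal ∂μ = T := by
    rw [integral_toReal hppunivMeas.aemeasurable
      (Filter.Eventually.of_forall fun ω => (hppfin ω _).lt_top),
      ← hμn Set.univ MeasurableSet.univ]
  have hMr : ∀ ω, ((Φ ω Set.univ).toReal) ^ n = (pp ω Set.univ).toReal := by
    intro ω; rw [hppuniv, ENNReal.toReal_pow]
  -- scaling of integrals under normalization
  have hscale : ∀ g : (Fin n → X) → ℝ,
      ∫ x, g x ∂μn = T * ∫ x, g x ∂((μn Set.univ)⁻¹ • μn) := by
    intro g
    rw [integral_smul_measure, ENNReal.toReal_inv, smul_eq_mul, ← mul_assoc,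
      mul_inv_cancel₀ hT0.ne', one_mul]
  -- the key expected-score formula
  have key : ∀ ν ∈ 𝓜, ∫ ω, S₁ ν ω ∂μ =
      T * (∫ x, S ((ν Set.univ)⁻¹ • ν) x ∂((μn Set.univ)⁻¹ • μn)) +
      c * (-f (ν Set.univ).toReal -
        f' (ν Set.univ).toReal * (T - (ν Set.univ).toReal)) := by
    intro ν hν
    set a : ℝ := (ν Set.univ).toReal with hadef
    set P : Measure (Fin n → X) := (ν Set.univ)⁻¹ • ν with hPdef
    have hPmem : P ∈ 𝓕n := hmemNorm ν hν
    have hSP_meas : Measurable (S P) := hSmeas P hPmem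
    have hSP_int : Integrable (S P) μn := hSint P hPmem
    have hswap : ∫ x, S P x ∂μn = ∫ ω, ∫ x, S P x ∂(pp ω) ∂μ := by
      rw [← hbind]
      exact aux_integral_bind μ pp hppMeas _ hSP_meas (hbind ▸ hSP_int)
    -- the Bregman part
    have hbfun : ∀ ω, c * b a (((Φ ω Set.univ).toReal) ^ n) =
        c * (-f a - f' a * ((pp ω Set.univ).toReal - a)) := by
      intro ω; rw [hb, hMr]
    have hbint : Integrable
        (fun ω => c * b a (((Φ ω Set.univ).toReal) ^ n)) μ := by
      refine Integrable.congr ?_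
        (Filter.Eventually.of_forall fun ω => (hbfun ω).symm)
      exact (((integrable_const (-f a)).sub
        (((hMint.sub (integrable_const a)).const_mul (f' a)))).const_mul c)
    have hgint : Integrable (fun ω => ∫ x, S P x ∂(pp ω)) μ := by
      refine Integrable.congr ((hint ν hν).sub hbint) ?_
      refine Filter.Eventually.of_forall fun ω => ?_
      simp only [Pi.sub_apply, hS₁ ν ω]; ring
    have hsplit : ∫ ω, S₁ ν ω ∂μ =
        (∫ ω, ∫ x, S P x ∂(pp ω) ∂μ) +
        ∫ ω, c * b a (((Φ ω Set.univ).toReal) ^ n) ∂μ := by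
      rw [← integral_add hgint hbint]
      exact integral_congr_ae (Filter.Eventually.of_forall fun ω => hS₁ ν ω)
    have hbval : ∫ ω, c * b a (((Φ ω Set.univ).toReal) ^ n) ∂μ =
        c * (-f a - f' a * (T - a)) := by
      rw [integral_congr_ae (Filter.Eventually.of_forall hbfun), integral_const_mul]
      congr 1
      have hin : Integrable (fun ω => f' a * (((pp ω) Set.univ).toReal - a)) μ := by
        exact ((hMint.sub (integrable_const a)).const_mul (f' a))
      rw [integral_sub (integrable_const _) hin, integral_const_mul,
        integral_sub hMint (integrable_const a), hMavg]
      simp [measure_univ]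
    rw [hsplit, hbval, ← hswap, hscale (S P)]
  -- now the main statement
  intro ν hν
  haveI := h𝓜fin ν hν
  set a : ℝ := (ν Set.univ).toReal with hadef
  have ha0 : 0 ≤ a := ENNReal.toReal_nonneg
  set Iν : ℝ := ∫ x, S ((ν Set.univ)⁻¹ • ν) x ∂((μn Set.univ)⁻¹ • μn) with hIν
  set Iμ : ℝ := ∫ x, S ((μn Set.univ)⁻¹ • μn) x ∂((μn Set.univ)⁻¹ • μn) with hIμ
  have hkν := key ν hν
  have hkμ := key μn hμnMem
  rw [← hadef, ← hIν] at hkν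
  rw [← hTdef, ← hIμ] at hkμ
  have hcons := hS ((μn Set.univ)⁻¹ • μn) (hmemNorm μn hμnMem)
    ((ν Set.univ)⁻¹ • ν) (hmemNorm ν hν)
  have h1 : Iμ ≤ Iν := hcons.1
  have hB : f a + f' a * (T - a) ≤ f T := hsub a ha0 T hT0.le
  constructor
  · rw [hkν, hkμ]
    nlinarith [mul_le_mul_of_nonneg_left h1 hT0.le]
  · constructor
    · intro heq
      rw [hkν, hkμ] at heq
      have d1 : 0 ≤ Iν - Iμ := by linarith
      have d2 : 0 ≤ f T - (f a + f' a * (T - a)) := by linarith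
      have hIeq : Iν = Iμ := by nlinarith [mul_nonneg hc.le d2, mul_nonneg hT0.le d1]
      have hBeq : f a + f' a * (T - a) = f T := by
        nlinarith [mul_nonneg hc.le d2, mul_nonneg hT0.le d1]
      have haT : a = T := by
        by_contra hne
        exact absurd hBeq (ne_of_lt (aux_bregman_strict f f' hf hsub a T ha0 hT0.le hne))
      -- recover `ν univ = μn univ`
      have hνtop : ν Set.univ ≠ ⊤ := measure_ne_top ν _
      have huniv : ν Set.univ = μn Set.univ :=
        (ENNReal.toReal_eq_toReal_iff' hνtop hμnFin.ne).mp haT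
      -- recover `ν* = μn*`
      have hstar : (ν Set.univ)⁻¹ • ν = (μn Set.univ)⁻¹ • μn :=
        hcons.2 hIeq
      have h0 : ν Set.univ ≠ 0 := by
        intro h
        exact h𝓜ne ν hν (Measure.measure_univ_eq_zero.mp h)
      calc ν = (ν Set.univ) • ((ν Set.univ)⁻¹ • ν) := by
              rw [smul_smul, ENNReal.mul_inv_cancel h0 hνtop, one_smul]
        _ = (μn Set.univ) • ((μn Set.univ)⁻¹ • μn) := by rw [hstar, huniv]
        _ = μn := by
              rw [smul_smul, ENNReal.mul_inv_cancel hμnPos.ne' hμnFin.ne, one_smul]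
    · rintro rfl; rfl
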